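/- arXiv:1508.01059 — 6 statements merged into one kernel-verified Lean document; each statement's English description precedes it below -/
import Mathlib

section
/- Consider a game with M players, where each player i has a feasible strategy set A^i ⊆ ℕ^n, a joint allocation is a tuple b = (b^1, …, b^M) ∈ (ℕ^n)^M, F : (ℕ^n)^M → ℝ≥0 is a social utility function, and f^i : (ℕ^n)^M → ℝ≥0 are player payoff functions. Suppose: (U1) F is monotone and submodular over the integer lattice ℕ^{M×n}; (U2) F(b) ≥ Σ_{i=1}^M f^i(b) for every b; (U3) f^i(b) ≥ F(b^i, b^{−i}) − F(0, b^{−i}) for every i and b. Let b with b^i ∈ A^i for all i be a pure Nash equilibrium, i.e., f^i(b^i, b^{−i}) ≥ f^i(b̃^i, b^{−i}) for every i and every b̃^i ∈ A^i. Then for every feasible allocation b* with b*^i ∈ A^i for all i, F(b*) ≤ 2 F(b). -/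
open Finset in
/-- Price of anarchy of a monotone utility game on the integer lattice (conditions
U1–U3) is at most 2: any pure Nash equilibrium `b` satisfies `F(b*) ≤ 2 F(b)` for
every feasible allocation `b*`. -/
theorem utility_game_poa_le_two {M n : ℕ}
    (A : Fin M → Set (Fin n → ℕ))
    (F : (Fin M → Fin n → ℕ) → ℝ)
    (f : Fin M → (Fin M → Fin n → ℕ) → ℝ)
    (hF_nonneg : ∀ b, 0 ≤ F b)
    (hf_nonneg : ∀ i b, 0 ≤ f i b)
    -- (U1) F is monotone and submodular over the integer lattice ℕ^{M×n}
    (hF_mono : Monotone F)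
    (hF_submod : ∀ x y : Fin M → Fin n → ℕ, F (x ⊔ y) + F (x ⊓ y) ≤ F x + F y)
    -- (U2)
    (hU2 : ∀ b, ∑ i, f i b ≤ F b)
    -- (U3)
    (hU3 : ∀ (b : Fin M → Fin n → ℕ) (i : Fin M),
      F b - F (Function.update b i 0) ≤ f i b)
    -- b is a feasible pure Nash equilibrium
    (b : Fin M → Fin n → ℕ) (hb_feas : ∀ i, b i ∈ A i)
    (hNE : ∀ (i : Fin M), ∀ b' ∈ A i, f i (Function.update b i b') ≤ f i b)
    -- b* is any feasible allocation
    (bstar : Fin M → Fin n → ℕ) (hbstar_feas : ∀ i, bstar i ∈ A i) :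
    F bstar ≤ 2 * F b := by
  -- interpolating sequence z k : coordinates < k joined with bstar
  set z : ℕ → (Fin M → Fin n → ℕ) :=
    fun k j => if (j : ℕ) < k then b j ⊔ bstar j else b j with hz
  have hz0 : z 0 = b := by funext j; simp [hz]
  have hzM : z M = b ⊔ bstar := by
    funext j; simp [hz, j.isLt]
  -- key step: each marginal increment is bounded by f i b
  have hstep : ∀ k : ℕ, ∀ hk : k < M, F (z (k + 1)) - F (z k) ≤ f ⟨k, hk⟩ b := by
    intro k hk
    set i : Fin M := ⟨k, hk⟩ with hi
    set x : Fin M → Fin n → ℕ := Function.update b i (bstar i) with hx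
    have hsup : x ⊔ z k = z (k + 1) := by
      funext j
      by_cases hji : j = i
      · subst hji
        simp [hx, hz, hi, sup_comm]
      · have hjk : (j : ℕ) ≠ k := fun h => hji (Fin.ext h)
        by_cases hlt : (j : ℕ) < k
        · have : (j : ℕ) < k + 1 := Nat.lt_succ_of_lt hlt
          simp [hx, hz, Function.update_of_ne hji, hlt, this, le_sup_left]
        · have : ¬ (j : ℕ) < k + 1 := by omega
          simp [hx, hz, Function.update_of_ne hji, hlt, this]
    have hinf : Function.update b i 0 ≤ x ⊓ z k := by
      intro j
      by_cases hji : j = i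
      · subst hji; simp [Function.update_self]
      · simp only [Function.update_of_ne hji]
        refine le_inf ?_ ?_
        · simp [hx, Function.update_of_ne hji]
        · intro m; by_cases hlt : (j : ℕ) < k <;> simp [hz, hlt, le_sup_left]
    have hsub := hF_submod x (z k)
    have h1 : F (z (k + 1)) - F (z k) ≤ F x - F (Function.update b i 0) := by
      have hm := hF_mono hinf
      rw [hsup] at hsub
      linarith
    have hupd : Function.update x i 0 = Function.update b i 0 := by
      simp [hx, Function.update_idem]
    have h2 : F x - F (Function.update b i 0) ≤ f i x := by
      have := hU3 x i
      rwa [hupd] at this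
    have h3 : f i x ≤ f i b := hNE i (bstar i) (hbstar_feas i)
    linarith
  -- telescoping
  have htel : F (z M) - F (z 0) = ∑ k ∈ Finset.range M, (F (z (k + 1)) - F (z k)) :=
    (Finset.sum_range_sub (fun k => F (z k)) M).symm
  have hsum : ∑ k ∈ Finset.range M, (F (z (k + 1)) - F (z k)) ≤ ∑ i : Fin M, f i b := by
    rw [← Fin.sum_univ_eq_sum_range (fun k => F (z (k + 1)) - F (z k)) M]
    refine Finset.sum_le_sum fun i _ => ?_
    have := hstep i.val i.isLt
    simpa using this
  have hU2b := hU2 b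
  have hmono : F bstar ≤ F (z M) := by
    rw [hzM]; exact hF_mono le_sup_right
  rw [hz0] at htel
  linarith
end

section
/- Let F : (ℕ^n)^M → ℝ≥0 be monotone and submodular over the integer lattice ℕ^{M×n}. Then for any two joint allocations b, b* ∈ (ℕ^n)^M, F(b* ∨ b) − F(b) ≤ Σ_{i=1}^M [F(b*^i ∨ b^i, b^{−i}) − F(b^i, b^{−i})], where ∨ is coordinatewise maximum and (x, b^{−i}) denotes the allocation obtained from b by replacing the i-th component with x ∈ ℕ^n. -/
open Finset in
/-- For a monotone submodular social function `F` on the integer lattice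
`ℕ^{M×n}`, the gap `F(b* ∨ b) − F(b)` is at most the sum of the per-player gaps
`F(b*^i ∨ b^i, b^{−i}) − F(b^i, b^{−i})`. -/
theorem submodular_telescoping_bound {M n : ℕ}
    (F : (Fin M → Fin n → ℕ) → ℝ)
    (hF_nonneg : ∀ b, 0 ≤ F b)
    (hF_mono : Monotone F)
    (hF_submod : ∀ x y : Fin M → Fin n → ℕ, F (x ⊔ y) + F (x ⊓ y) ≤ F x + F y)
    (b bstar : Fin M → Fin n → ℕ) :
    F (bstar ⊔ b) - F b ≤
      ∑ i, (F (Function.update b i (bstar i ⊔ b i)) - F b) := by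
  -- hybrid allocation: first k coordinates joined
  set h : ℕ → (Fin M → Fin n → ℕ) :=
    fun k i => if (i : ℕ) < k then bstar i ⊔ b i else b i with hh
  have key : ∀ k ≤ M, F (h k) - F b ≤
      ∑ i ∈ Finset.univ.filter (fun i : Fin M => (i : ℕ) < k),
        (F (Function.update b i (bstar i ⊔ b i)) - F b) := by
    intro k hk
    induction k with
    | zero =>
      simp only [Nat.not_lt_zero, Finset.filter_false, Finset.sum_empty]
      have : h 0 = b := by funext i; simp [hh]
      simp [this]
    | succ k ih =>
      have hkM : k < M := hk
      set i : Fin M := ⟨k, hkM⟩ with hi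
      have hsup : h k ⊔ Function.update b i (bstar i ⊔ b i) = h (k + 1) := by
        funext j
        by_cases hji : j = i
        · subst hji
          simp [hh, Function.update_self, hi]
        · have hne : (j : ℕ) ≠ k := by
            intro hc; exact hji (Fin.ext hc)
          simp only [Pi.sup_apply, Function.update_of_ne hji, hh]
          by_cases hlt : (j : ℕ) < k
          · have : (j : ℕ) < k + 1 := by omega
            simp [hlt, this, sup_assoc, sup_comm (b j) (b j)]
          · have : ¬ (j : ℕ) < k + 1 := by omega
            simp [hlt, this]
      have hinf : h k ⊓ Function.update b i (bstar i ⊔ b i) = b := by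
        funext j
        by_cases hji : j = i
        · subst hji
          simp only [Pi.inf_apply, Function.update_self, hh, hi]
          simp [inf_of_le_left (le_sup_right : b i ≤ bstar i ⊔ b i)]
        · simp only [Pi.inf_apply, Function.update_of_ne hji, hh]
          by_cases hlt : (j : ℕ) < k
          · simp [hlt, inf_of_le_right (le_sup_right : b j ≤ bstar j ⊔ b j)]
          · simp [hlt]
      have hsm := hF_submod (h k) (Function.update b i (bstar i ⊔ b i))
      rw [hsup, hinf] at hsm
      have hstep : F (h (k + 1)) - F (h k) ≤
          F (Function.update b i (bstar i ⊔ b i)) - F b := by linarith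
      have hfilt : Finset.univ.filter (fun j : Fin M => (j : ℕ) < k + 1)
          = insert i (Finset.univ.filter (fun j : Fin M => (j : ℕ) < k)) := by
        ext j
        simp only [Finset.mem_filter, Finset.mem_univ, true_and, Finset.mem_insert]
        constructor
        · intro hj
          rcases Nat.lt_succ_iff_lt_or_eq.mp hj with h1 | h1
          · exact Or.inr h1
          · exact Or.inl (Fin.ext h1)
        · rintro (rfl | h1)
          · simp [hi]
          · omega
      rw [hfilt, Finset.sum_insert (by simp [hi])]
      have := ih (by omega)
      linarith
  have hM := key M le_rfl
  have h1 : h M = bstar ⊔ b := by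
    funext j; simp [hh, j.isLt]
  have h2 : Finset.univ.filter (fun j : Fin M => (j : ℕ) < M) = Finset.univ := by
    ext j; simp [j.isLt]
  rw [h1, h2] at hM
  exact hM
end

section
/- Fix a finite directed graph on vertex set V, in-neighborhoods N(u) ⊆ V, and thresholds t^u_v ∈ ℕ for every u ∈ V and v ∈ N(u). For a budget allocation b ∈ ℕ^V, let I(b) ⊆ V be the smallest set S such that {v : b_v > 0} ⊆ S and, for every u ∈ V, if there exists v ∈ N(u) ∩ S with b_v ≥ t^u_v and (b_v > 0 or t^u_v = 0), then u ∈ S. Then the function f_σ : ℕ^V → ℝ≥0 given by f_σ(b) = |I(b)| is monotone and submodular over the integer lattice. -/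
/-- The deterministic influence function of the Budgeted Triggering model (for a
fixed realization of the triggering vectors) is monotone and submodular over the
integer lattice. Here `I b` is the smallest set containing every node with
positive budget and closed under the propagation rule, and `f_σ(b) = |I(b)|`. -/
theorem budgeted_triggering_influence_monotone_submodular
    {V : Type*} [Fintype V] (N : V → Set V) (t : V → V → ℕ)
    (I : (V → ℕ) → Set V)
    (hI : ∀ b : V → ℕ,
      I b = ⋂₀ {S : Set V | {v | 0 < b v} ⊆ S ∧
        ∀ u, (∃ v ∈ N u, v ∈ S ∧ t u v ≤ b v ∧ (0 < b v ∨ t u v = 0)) → u ∈ S}) :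
    Monotone (fun b : V → ℕ => ((I b).ncard : ℝ)) ∧
      ∀ x y : V → ℕ,
        ((I (x ⊔ y)).ncard : ℝ) + ((I (x ⊓ y)).ncard : ℝ) ≤
          ((I x).ncard : ℝ) + ((I y).ncard : ℝ) := by
  have hmin : ∀ (b : V → ℕ) (S : Set V), ({v | 0 < b v} ⊆ S ∧
      ∀ u, (∃ v ∈ N u, v ∈ S ∧ t u v ≤ b v ∧ (0 < b v ∨ t u v = 0)) → u ∈ S) →
      I b ⊆ S := by
    intro b S hS
    rw [hI]; exact Set.sInter_subset_of_mem hS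
  have hseed : ∀ (b : V → ℕ) v, 0 < b v → v ∈ I b := by
    intro b v hv
    rw [hI]; intro S hS; exact hS.1 hv
  have hstep : ∀ (b : V → ℕ) u,
      (∃ v ∈ N u, v ∈ I b ∧ t u v ≤ b v ∧ (0 < b v ∨ t u v = 0)) → u ∈ I b := by
    rintro b u ⟨v, hvN, hvI, hle, hpos⟩
    rw [hI]; intro S hS
    exact hS.2 u ⟨v, hvN, hmin b S hS hvI, hle, hpos⟩
  have hmono : ∀ b b' : V → ℕ, b ≤ b' → I b ⊆ I b' := by
    intro b b' hbb
    apply hmin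
    refine ⟨fun v hv => hseed b' v (lt_of_lt_of_le hv (hbb v)), ?_⟩
    rintro u ⟨v, hvN, hvI, hle, hpos⟩
    exact hstep b' u ⟨v, hvN, hvI, hle.trans (hbb v),
      hpos.imp (fun h => lt_of_lt_of_le h (hbb v)) id⟩
  have hsup : ∀ x y : V → ℕ, I (x ⊔ y) ⊆ I x ∪ I y := by
    intro x y
    apply hmin
    constructor
    · intro v hv
      simp only [Set.mem_setOf_eq, Pi.sup_apply, lt_sup_iff] at hv
      exact hv.elim (fun h => Or.inl (hseed x v h)) (fun h => Or.inr (hseed y v h))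
    · rintro u ⟨v, hvN, hvI, hle, hpos⟩
      simp only [Pi.sup_apply, le_sup_iff] at hle
      by_cases ht : t u v = 0
      · rcases hvI with h | h
        · exact Or.inl (hstep x u ⟨v, hvN, h, ht ▸ Nat.zero_le _, Or.inr ht⟩)
        · exact Or.inr (hstep y u ⟨v, hvN, h, ht ▸ Nat.zero_le _, Or.inr ht⟩)
      · have htpos : 0 < t u v := Nat.pos_of_ne_zero ht
        rcases hle with h | h
        · exact Or.inl (hstep x u ⟨v, hvN, hseed x v (lt_of_lt_of_le htpos h), h,
            Or.inl (lt_of_lt_of_le htpos h)⟩)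
        · exact Or.inr (hstep y u ⟨v, hvN, hseed y v (lt_of_lt_of_le htpos h), h,
            Or.inl (lt_of_lt_of_le htpos h)⟩)
  constructor
  · intro b b' h
    simp only
    exact_mod_cast Set.ncard_le_ncard (hmono b b' h) (Set.toFinite _)
  · intro x y
    have h2 : I (x ⊓ y) ⊆ I x ∩ I y :=
      Set.subset_inter (hmono _ _ inf_le_left) (hmono _ _ inf_le_right)
    have e : (I x ∪ I y).ncard + (I x ∩ I y).ncard = (I x).ncard + (I y).ncard :=
      Set.ncard_union_add_ncard_inter _ _
    have hle := add_le_add (Set.ncard_le_ncard (hsup x y) (Set.toFinite _))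
      (Set.ncard_le_ncard h2 (Set.toFinite _))
    exact_mod_cast hle.trans_eq e
end

section
/- Let f : ℕ^n → ℝ≥0 be monotone and submodular over the integer lattice, let b, y ∈ ℕ^n, let B > 0 and T ≥ 0 be reals with Σ_{i=1}^n y_i ≤ B, and suppose that for every coordinate i with y_i > b_i it holds that f(b ∨ y_i χ_i) − f(b) ≤ T · y_i. Then f(y) ≤ f(b) + T · B. -/
open Finset in
/-- If every coordinate where the benchmark `y` exceeds the current allocation
`b` has marginal value per unit at most `T`, and the benchmark uses at most `B`
units of budget, then `f(y) ≤ f(b) + T·B`. -/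
theorem below_threshold_bound {n : ℕ} (f : (Fin n → ℕ) → ℝ)
    (hf_nonneg : ∀ x, 0 ≤ f x)
    (hf_mono : Monotone f)
    (hf_submod : ∀ x y : Fin n → ℕ, f (x ⊔ y) + f (x ⊓ y) ≤ f x + f y)
    (b y : Fin n → ℕ) (B T : ℝ) (hB : 0 < B) (hT : 0 ≤ T)
    (hy_budget : (∑ i, (y i : ℝ)) ≤ B)
    (h_thresh : ∀ i : Fin n, b i < y i →
      f (b ⊔ fun j => if j = i then y i else 0) - f b ≤ T * (y i : ℝ)) :
    f y ≤ f b + T * B := by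
  set g : ℕ → (Fin n → ℕ) := fun k j => max (b j) (if j.val < k then y j else 0) with hg
  have key : ∀ k : ℕ, k ≤ n →
      f (g k) ≤ f b + T * ∑ i : Fin n, (if i.val < k then (y i : ℝ) else 0) := by
    intro k
    induction k with
    | zero =>
      intro _
      have : g 0 = b := by funext j; simp [hg]
      simp [this]
    | succ k ih =>
      intro hk1
      have hk : k < n := Nat.lt_of_succ_le hk1
      have ihk := ih (Nat.le_of_lt hk)
      set i0 : Fin n := ⟨k, hk⟩ with hi0
      have hsum : ∑ i : Fin n, (if i.val < k + 1 then (y i : ℝ) else 0)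
          = (∑ i : Fin n, (if i.val < k then (y i : ℝ) else 0)) + (y i0 : ℝ) := by
        have : ∀ i : Fin n, (if i.val < k + 1 then (y i : ℝ) else 0)
            = (if i.val < k then (y i : ℝ) else 0) + (if i = i0 then (y i : ℝ) else 0) := by
          intro i
          by_cases h1 : i = i0
          · subst h1
            simp [hi0]
          · have hne : i.val ≠ k := fun hc => h1 (Fin.ext hc)
            by_cases h2 : i.val < k
            · simp [h2, Nat.lt_succ_of_lt h2, h1]
            · have : ¬ i.val < k + 1 := by omega
              simp [h2, this, h1]
        rw [Finset.sum_congr rfl (fun i _ => this i), Finset.sum_add_distrib,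
          Finset.sum_ite_eq' Finset.univ i0 (fun i => (y i : ℝ))]
        simp
      have hstep : f (g (k + 1)) ≤ f (g k) + T * (y i0 : ℝ) := by
        by_cases hyb : y i0 ≤ b i0
        · have heq : g (k + 1) = g k := by
            funext j
            by_cases hj : j = i0
            · subst hj; have hv : (i0 : ℕ) = k := rfl; simp only [hg]; split_ifs <;> omega
            · have hne : j.val ≠ k := fun hc => hj (Fin.ext hc)
              simp only [hg]
              congr 1
              have : (j.val < k + 1) ↔ (j.val < k) := by omega
              simp [this]
          rw [heq]
          have : (0:ℝ) ≤ T * (y i0 : ℝ) := mul_nonneg hT (by positivity)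
          linarith
        · push_neg at hyb
          have hth := h_thresh i0 hyb
          have hsub := hf_submod (g k) (b ⊔ fun j => if j = i0 then y i0 else 0)
          have hjoin : (g k) ⊔ (b ⊔ fun j => if j = i0 then y i0 else 0) = g (k + 1) := by
            funext j
            by_cases hj : j = i0
            · subst hj
              simp [hg, Pi.sup_apply, hi0]
            · have hne : j.val ≠ k := fun hc => hj (Fin.ext hc)
              have hiff : (j.val < k + 1) ↔ (j.val < k) := by omega
              simp [hg, Pi.sup_apply, hj, hiff]
          have hmeet : (g k) ⊓ (b ⊔ fun j => if j = i0 then y i0 else 0) = b := by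
            funext j
            by_cases hj : j = i0
            · subst hj
              simp [hg, Pi.inf_apply, Pi.sup_apply, hi0]
            · have hne : j.val ≠ k := fun hc => hj (Fin.ext hc)
              simp [hg, Pi.inf_apply, Pi.sup_apply, hj]
          rw [hjoin, hmeet] at hsub
          linarith
      rw [hsum]
      linarith
  have hfin := key n (le_refl n)
  have hle : y ≤ g n := by
    intro j
    simp [hg, j.isLt]
  have hsum : ∑ i : Fin n, (if i.val < n then (y i : ℝ) else 0) = ∑ i : Fin n, (y i : ℝ) := by
    apply Finset.sum_congr rfl
    intro i _
    simp [i.isLt]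
  have h1 : f y ≤ f (g n) := hf_mono hle
  rw [hsum] at hfin
  have h2 : T * (∑ i : Fin n, (y i : ℝ)) ≤ T * B := mul_le_mul_of_nonneg_left hy_budget hT
  linarith
end

section
/- Let f : ℕ^n → ℝ≥0 be monotone and submodular over the integer lattice, let b, y ∈ ℕ^n, let B > 0, T ≥ 0, V ≥ 0 be reals, and let ℓ ∈ [n] be a coordinate such that Σ_{i ≠ ℓ} y_i ≤ B/2, f(b ∨ y_ℓ χ_ℓ) − f(b) ≤ V, and for every coordinate i ≠ ℓ with y_i > b_i it holds that f(b ∨ y_i χ_i) − f(b) ≤ T · y_i. Then f(y) ≤ f(b) + V + T · B / 2. -/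
open Finset in
lemma marginal_sum_bound {n : ℕ} (f : (Fin n → ℕ) → ℝ)
    (hf_submod : ∀ x y : Fin n → ℕ, f (x ⊔ y) + f (x ⊓ y) ≤ f x + f y)
    (b y : Fin n → ℕ) (s : Finset (Fin n)) :
    f (fun i => if i ∈ s then max (b i) (y i) else b i)
      ≤ f b + ∑ i ∈ s, (f (b ⊔ fun j => if j = i then y i else 0) - f b) := by
  induction s using Finset.induction with
  | empty => simp
  | @insert a s ha ih =>
    have key := hf_submod (fun i => if i ∈ s then max (b i) (y i) else b i)
      (b ⊔ fun j => if j = a then y a else 0)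
    have h1 : ((fun i => if i ∈ s then max (b i) (y i) else b i)
        ⊔ (b ⊔ fun j => if j = a then y a else 0))
        = (fun i => if i ∈ insert a s then max (b i) (y i) else b i) := by
      funext j
      simp only [Pi.sup_apply, Finset.mem_insert]
      by_cases hja : j = a
      · subst hja
        simp [ha]
      · by_cases hjs : j ∈ s <;> simp [hja, hjs] <;> omega
    have h2 : ((fun i => if i ∈ s then max (b i) (y i) else b i)
        ⊓ (b ⊔ fun j => if j = a then y a else 0)) = b := by
      funext j
      simp only [Pi.inf_apply, Pi.sup_apply]
      by_cases hja : j = a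
      · subst hja
        simp [ha]
      · by_cases hjs : j ∈ s <;> simp [hja, hjs] <;> omega
    rw [h1, h2] at key
    rw [Finset.sum_insert ha]
    linarith

open Finset in
/-- The case of the online analysis in which one agent `ℓ` receives more than
half of the benchmark budget: if `Σ_{i ≠ ℓ} y_i ≤ B/2`, the marginal value of
raising coordinate `ℓ` to `y_ℓ` is at most `V`, and every other coordinate with
`y_i > b_i` has marginal value per unit at most `T`, then
`f(y) ≤ f(b) + V + T·B/2`. -/
theorem big_agent_bound {n : ℕ} (f : (Fin n → ℕ) → ℝ)
    (hf_nonneg : ∀ x, 0 ≤ f x)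
    (hf_mono : Monotone f)
    (hf_submod : ∀ x y : Fin n → ℕ, f (x ⊔ y) + f (x ⊓ y) ≤ f x + f y)
    (b y : Fin n → ℕ) (B T V : ℝ) (hB : 0 < B) (hT : 0 ≤ T) (hV : 0 ≤ V)
    (ℓ : Fin n)
    (hy_budget : (∑ i ∈ Finset.univ.erase ℓ, (y i : ℝ)) ≤ B / 2)
    (hℓ : f (b ⊔ fun j => if j = ℓ then y ℓ else 0) - f b ≤ V)
    (h_thresh : ∀ i : Fin n, i ≠ ℓ → b i < y i →
      f (b ⊔ fun j => if j = i then y i else 0) - f b ≤ T * (y i : ℝ)) :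
    f y ≤ f b + V + T * B / 2 := by
  have key := marginal_sum_bound f hf_submod b y Finset.univ
  have hsup : (fun i => if i ∈ Finset.univ then max (b i) (y i) else b i) = b ⊔ y := by
    funext j; simp [Pi.sup_apply]
  rw [hsup] at key
  have hy_le : f y ≤ f (b ⊔ y) := hf_mono (le_sup_right)
  have hsplit : ∑ i ∈ Finset.univ, (f (b ⊔ fun j => if j = i then y i else 0) - f b)
      = (f (b ⊔ fun j => if j = ℓ then y ℓ else 0) - f b)
        + ∑ i ∈ Finset.univ.erase ℓ, (f (b ⊔ fun j => if j = i then y i else 0) - f b) := by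
    rw [← Finset.add_sum_erase _ _ (Finset.mem_univ ℓ)]
  have hterm : ∀ i ∈ Finset.univ.erase ℓ,
      (f (b ⊔ fun j => if j = i then y i else 0) - f b) ≤ T * (y i : ℝ) := by
    intro i hi
    have hine : i ≠ ℓ := (Finset.mem_erase.mp hi).1
    by_cases hby : b i < y i
    · exact h_thresh i hine hby
    · have heq : (b ⊔ fun j => if j = i then y i else 0) = b := by
        funext j
        simp only [Pi.sup_apply]
        by_cases hji : j = i
        · subst hji; simp; omega
        · simp [hji]
      rw [heq]
      have : (0:ℝ) ≤ T * (y i : ℝ) := mul_nonneg hT (by positivity)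
      linarith
  have hsum : ∑ i ∈ Finset.univ.erase ℓ, (f (b ⊔ fun j => if j = i then y i else 0) - f b)
      ≤ T * (B / 2) := by
    calc _ ≤ ∑ i ∈ Finset.univ.erase ℓ, T * (y i : ℝ) := Finset.sum_le_sum hterm
    _ = T * ∑ i ∈ Finset.univ.erase ℓ, (y i : ℝ) := by rw [Finset.mul_sum]
    _ ≤ T * (B / 2) := by exact mul_le_mul_of_nonneg_left hy_budget hT
  rw [hsplit] at key
  have : T * (B/2) = T * B / 2 := by ring
  linarith
end

section
/- Let f : ℕ^n → ℝ≥0 be monotone and submodular over the integer lattice and let v ∈ ℕ^n. For each i ∈ [n], let v_{<i} ∈ ℕ^n be the vector that agrees with v on coordinates j < i and is 0 on coordinates j ≥ i, and define the marginal weight w_i = f(v_{<i} ∨ v_i χ_i) − f(v_{<i}). Then for every subset S ⊆ [n], letting v_S be the vector that agrees with v on coordinates in S and is 0 elsewhere, it holds that f(v_S) − f(0) ≥ Σ_{i ∈ S} w_i. -/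
open Finset in
/-- Decomposing the value of an allocation `v` along a fixed order of the
coordinates: with `w_i = f(v_{<i} ∨ v_i χ_i) − f(v_{<i})`, the restriction `v_S`
of `v` to any coordinate subset `S` satisfies `f(v_S) − f(0) ≥ Σ_{i ∈ S} w_i`. -/
theorem restriction_value_ge_weight_sum {n : ℕ} (f : (Fin n → ℕ) → ℝ)
    (hf_nonneg : ∀ x, 0 ≤ f x)
    (hf_mono : Monotone f)
    (hf_submod : ∀ x y : Fin n → ℕ, f (x ⊔ y) + f (x ⊓ y) ≤ f x + f y)
    (v : Fin n → ℕ) (S : Finset (Fin n)) :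
    ∑ i ∈ S,
        (f ((fun j => if j < i then v j else 0) ⊔ fun j => if j = i then v i else 0)
          - f (fun j => if j < i then v j else 0)) ≤
      f (fun j => if j ∈ S then v j else 0) - f 0 := by
  induction S using Finset.induction_on_max with
  | empty =>
    have : (fun j : Fin n => if j ∈ (∅ : Finset (Fin n)) then v j else 0) = 0 := by
      funext j; simp
    rw [this]
    simp
  | insert a s ha ih =>
    have hain : a ∉ s := fun h => lt_irrefl a (ha a h)
    rw [Finset.sum_insert hain]
    have key : f ((fun j => if j < a then v j else 0) ⊔ fun j => if j = a then v a else 0)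
        - f (fun j => if j < a then v j else 0)
        ≤ f (fun j => if j ∈ insert a s then v j else 0)
          - f (fun j => if j ∈ s then v j else 0) := by
      have h := hf_submod (fun j => if j < a then v j else 0)
        (fun j => if j ∈ insert a s then v j else 0)
      have hsup : ((fun j => if j < a then v j else 0) ⊔
          fun j => if j ∈ insert a s then v j else 0)
          = ((fun j => if j < a then v j else 0) ⊔ fun j => if j = a then v a else 0) := by
        funext j
        simp only [Pi.sup_apply, Finset.mem_insert]
        by_cases h1 : j < a
        · have h2 : j ≠ a := ne_of_lt h1
          by_cases h3 : j ∈ s <;> simp [h1, h2, h3]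
        · by_cases h2 : j = a
          · subst h2; simp [h1]
          · have h3 : j ∉ s := fun hm => h1 (ha j hm)
            simp [h1, h2, h3]
      have hinf : ((fun j => if j < a then v j else 0) ⊓
          fun j => if j ∈ insert a s then v j else 0)
          = (fun j => if j ∈ s then v j else 0) := by
        funext j
        simp only [Pi.inf_apply, Finset.mem_insert]
        by_cases h3 : j ∈ s
        · have h1 : j < a := ha j h3
          simp [h1, h3, ne_of_lt h1]
        · by_cases h2 : j = a
          · subst h2; simp [h3]
          · by_cases h1 : j < a <;> simp [h1, h2, h3]
      rw [hsup, hinf] at h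
      linarith
    linarith [ih]
end
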